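/- Let H be a real inner product space, f : H → ℝ, x ∈ H, d ∈ H with d ≠ 0, and let g ≥ 0, L > 0, γ_max > 0 be real numbers. Set γ := min{g/(L·‖d‖²), γ_max}, and assume f(x + γ·d) ≤ f(x) − γ·g + (γ²·L/2)·‖d‖² and that either γ_max ≥ 1 or γ < γ_max. Then for every ξ ∈ [0, 1], f(x + γ·d) ≤ f(x) − ξ·g + (ξ²·L/2)·‖d‖². -/
import Mathlib

open scoped RealInnerProductSpace

/-- Decrease inequality at good steps: when either `γ_max ≥ 1` or the accepted step
`γ = min{g/(L‖d‖²), γ_max}` is interior, the surrogate bound extends to all of `[0, 1]`. -/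
theorem stmt_10 {H : Type*} [NormedAddCommGroup H] [InnerProductSpace ℝ H]
    (f : H → ℝ) (x d : H) (hd : d ≠ 0) (g L γmax : ℝ) (hg : 0 ≤ g) (hL : 0 < L)
    (hγmax : 0 < γmax) (γ : ℝ) (hγ : γ = min (g / (L * ‖d‖ ^ 2)) γmax)
    (hsd : f (x + γ • d) ≤ f x - γ * g + γ ^ 2 * L / 2 * ‖d‖ ^ 2)
    (hgood : 1 ≤ γmax ∨ γ < γmax) :
    ∀ ξ ∈ Set.Icc (0 : ℝ) 1,
      f (x + γ • d) ≤ f x - ξ * g + ξ ^ 2 * L / 2 * ‖d‖ ^ 2 := by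
  intro ξ hξ
  obtain ⟨h0, h1⟩ := hξ
  have hc : 0 < L * ‖d‖ ^ 2 := mul_pos hL (pow_pos (norm_pos_iff.mpr hd) 2)
  have key : -(γ * g) + γ ^ 2 * L / 2 * ‖d‖ ^ 2 ≤ -(ξ * g) + ξ ^ 2 * L / 2 * ‖d‖ ^ 2 := by
    rcases le_or_gt (g / (L * ‖d‖ ^ 2)) γmax with h | h
    · have hγeq : γ = g / (L * ‖d‖ ^ 2) := by rw [hγ, min_eq_left h]
      have hgc : γ * (L * ‖d‖ ^ 2) = g := by
        rw [hγeq]; field_simp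
      nlinarith [sq_nonneg (ξ - γ), hc]
    · have hγeq : γ = γmax := by rw [hγ, min_eq_right h.le]
      have h1γ : 1 ≤ γ := by
        rcases hgood with h' | h'
        · rw [hγeq]; exact h'
        · exfalso; rw [hγeq] at h'; exact lt_irrefl _ h'
      have hgle : γ * (L * ‖d‖ ^ 2) ≤ g := by
        rw [hγeq]
        calc γmax * (L * ‖d‖ ^ 2) ≤ g / (L * ‖d‖ ^ 2) * (L * ‖d‖ ^ 2) := by
              exact mul_le_mul_of_nonneg_right h.le hc.le
          _ = g := by field_simp
      have hξγ : ξ ≤ γ := h1.trans h1γ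
      have hB : (ξ + γ) * (L * ‖d‖ ^ 2) ≤ 2 * g := by
        nlinarith [mul_le_mul_of_nonneg_right hξγ hc.le]
      nlinarith [mul_nonneg (sub_nonneg.mpr hξγ) (sub_nonneg.mpr hB)]
  linarith [hsd, key]
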